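/- (Theorem 1 (i): superposition of dominative p-superharmonic functions.) Let n ≥ 2, 2 ≤ p ≤ ∞, and let u₁, …, u_N ∈ C²(ℝⁿ) satisfy D_p uᵢ ≤ 0 at every point of ℝⁿ for each i = 1, …, N. Then Δ_p[u₁ + ⋯ + u_N] ≤ 0 at every point of ℝⁿ. -/
import Mathlib


open scoped ENNReal
open Filter Matrix

noncomputable section

/-- Hessian matrix of `u` at `x` (entries are second partial derivatives). -/
def hess {n : ℕ} (u : EuclideanSpace ℝ (Fin n) → ℝ) (x : EuclideanSpace ℝ (Fin n)) :
    Matrix (Fin n) (Fin n) ℝ :=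
  Matrix.of fun i j =>
    iteratedFDeriv ℝ 2 u x ![EuclideanSpace.single i 1, EuclideanSpace.single j 1]

/-- Laplacian: trace of the Hessian. -/
def lapl {n : ℕ} (u : EuclideanSpace ℝ (Fin n) → ℝ) (x : EuclideanSpace ℝ (Fin n)) : ℝ :=
  ∑ i, hess u x i i

/-- Quadratic form `zᵀ A z`. -/
def quadForm {n : ℕ} (A : Matrix (Fin n) (Fin n) ℝ) (z : EuclideanSpace ℝ (Fin n)) : ℝ :=
  ∑ i, ∑ j, z i * A i j * z j

/-- Largest eigenvalue of a (symmetric) matrix: the max of `zᵀAz` over unit vectors `z`. -/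
def lamMax {n : ℕ} (A : Matrix (Fin n) (Fin n) ℝ) : ℝ :=
  sSup {r : ℝ | ∃ z : EuclideanSpace ℝ (Fin n), ‖z‖ = 1 ∧ r = quadForm A z}

open Classical in
/-- Dominative p-Laplacian `D_p u(x)`, for `2 ≤ p ≤ ∞`. -/
def Dop {n : ℕ} (p : ℝ≥0∞) (u : EuclideanSpace ℝ (Fin n) → ℝ)
    (x : EuclideanSpace ℝ (Fin n)) : ℝ :=
  if p = ⊤ then lamMax (hess u x)
  else (p.toReal - 2) * lamMax (hess u x) + lapl u x

open Classical in
/-- p-Laplacian `Δ_p u(x)` (the `∞`-Laplacian `∇u H u ∇uᵀ` for `p = ∞`).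
For finite `p`, `Δ_p u = |∇u|^{p-2} Δu + (p-2)|∇u|^{p-4} ∇u Hu ∇uᵀ` with real powers,
which is automatically `0` at critical points when `p > 2` and `Δu` when `p = 2`. -/
def DeltaOp {n : ℕ} (p : ℝ≥0∞) (u : EuclideanSpace ℝ (Fin n) → ℝ)
    (x : EuclideanSpace ℝ (Fin n)) : ℝ :=
  if p = ⊤ then quadForm (hess u x) (gradient u x)
  else ‖gradient u x‖ ^ (p.toReal - 2) * lapl u x
    + (p.toReal - 2) * ‖gradient u x‖ ^ (p.toReal - 4) * quadForm (hess u x) (gradient u x)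

open Classical in
/-- Radial profile `W_{k,p}` of the fundamental solution of the p-Laplace equation in ℝᵏ. -/
def Wfun (p : ℝ≥0∞) (k : ℕ) (r : ℝ) : ℝ :=
  if p = ⊤ ∨ k = 1 then -r
  else if p.toReal = k then -Real.log r
  else -((p.toReal - 1) / (p.toReal - k)) * r ^ ((p.toReal - k) / (p.toReal - 1))

/-- Euclidean norm of a plain vector in `Fin k → ℝ`. -/
def enorm' {k : ℕ} (v : Fin k → ℝ) : ℝ := Real.sqrt (∑ i, v i ^ 2)

/-- `u : Ω → (-∞,∞]` is a viscosity supersolution of `G(∇u, Hu) = 0` on `Ω`: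
lower semicontinuous, `> -∞`, finite on a dense subset of `Ω`, and every `C²`
test function `φ` touching `u` from below at `x₀ ∈ Ω` satisfies `G φ x₀ ≤ 0`. -/
def ViscSupersol {n : ℕ}
    (G : (EuclideanSpace ℝ (Fin n) → ℝ) → EuclideanSpace ℝ (Fin n) → ℝ)
    (Ω : Set (EuclideanSpace ℝ (Fin n))) (u : EuclideanSpace ℝ (Fin n) → EReal) : Prop :=
  LowerSemicontinuousOn u Ω ∧
  (∀ x ∈ Ω, u x ≠ ⊥) ∧
  Ω ⊆ closure {x | x ∈ Ω ∧ u x ≠ ⊤} ∧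
  ∀ x₀ ∈ Ω, ∀ φ : EuclideanSpace ℝ (Fin n) → ℝ,
    ContDiffAt ℝ 2 φ x₀ → (φ x₀ : EReal) = u x₀ →
    (∀ᶠ x in nhdsWithin x₀ Ω, (φ x : EReal) ≤ u x) → G φ x₀ ≤ 0

open Classical in
/-- EReal-valued fundamental solution `w_{m,p}` on ℝᵐ, equal to `⊤` at the pole when `p ≤ m`,
`p ≠ ∞`. -/
def wEReal (p : ℝ≥0∞) (m : ℕ) (x : EuclideanSpace ℝ (Fin m)) : EReal :=
  if x = 0 ∧ p ≤ (m : ℝ≥0∞) ∧ p ≠ ⊤ then (⊤ : EReal)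
  else ((Wfun p m ‖x‖ : ℝ) : EReal)

end


section Stmt8Aux

variable {n : ℕ}

private lemma quadForm_zero (A : Matrix (Fin n) (Fin n) ℝ) :
    quadForm A (0 : EuclideanSpace ℝ (Fin n)) = 0 := by
  simp [quadForm]

private lemma quadForm_smul (A : Matrix (Fin n) (Fin n) ℝ) (c : ℝ)
    (z : EuclideanSpace ℝ (Fin n)) :
    quadForm A (c • z) = c ^ 2 * quadForm A z := by
  simp only [quadForm]
  rw [Finset.mul_sum]
  refine Finset.sum_congr rfl fun i _ => ?_
  rw [Finset.mul_sum]
  refine Finset.sum_congr rfl fun j _ => ?_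
  simp only [PiLp.smul_apply, smul_eq_mul]
  ring

private lemma quadForm_sum {N : ℕ} (A : Fin N → Matrix (Fin n) (Fin n) ℝ)
    (z : EuclideanSpace ℝ (Fin n)) :
    quadForm (∑ k, A k) z = ∑ k, quadForm (A k) z := by
  have key : ∀ i j, z i * (∑ k, A k) i j * z j = ∑ k, z i * A k i j * z j := by
    intro i j
    rw [Matrix.sum_apply, Finset.mul_sum, Finset.sum_mul]
  simp only [quadForm, key]
  exact (Finset.sum_congr rfl fun i _ => Finset.sum_comm).trans Finset.sum_comm

private lemma lamSet_bddAbove (A : Matrix (Fin n) (Fin n) ℝ) :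
    BddAbove {r : ℝ | ∃ z : EuclideanSpace ℝ (Fin n), ‖z‖ = 1 ∧ r = quadForm A z} := by
  refine ⟨∑ i, ∑ j, |A i j|, ?_⟩
  rintro r ⟨z, hz, rfl⟩
  have hzi : ∀ i, |z i| ≤ 1 := by
    intro i
    have h1 : |z i| ^ 2 ≤ ∑ j, ‖z j‖ ^ 2 := by
      have : |z i| ^ 2 = ‖z i‖ ^ 2 := by rw [Real.norm_eq_abs]
      rw [this]
      exact Finset.single_le_sum (f := fun j => ‖z j‖ ^ 2)
        (fun j _ => sq_nonneg _) (Finset.mem_univ i)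
    have h2 : ‖z‖ = Real.sqrt (∑ j, ‖z j‖ ^ 2) := EuclideanSpace.norm_eq z
    have hS : (0:ℝ) ≤ ∑ j, ‖z j‖ ^ 2 :=
      Finset.sum_nonneg fun j _ => sq_nonneg _
    have h4 : ∑ j, ‖z j‖ ^ 2 = 1 := by
      have h5 := Real.sq_sqrt hS
      rw [← h2, hz] at h5
      simpa using h5.symm
    nlinarith [abs_nonneg (z i)]
  refine Finset.sum_le_sum fun i _ => Finset.sum_le_sum fun j _ => ?_
  calc z i * A i j * z j ≤ |z i * A i j * z j| := le_abs_self _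
    _ = |z i| * |A i j| * |z j| := by rw [abs_mul, abs_mul]
    _ ≤ 1 * |A i j| * 1 := by
        have h1 := hzi i; have h2 := hzi j
        gcongr
        all_goals first | exact h1 | exact h2 | positivity
    _ = |A i j| := by ring

private lemma lamSet_nonempty (hn : 0 < n) (A : Matrix (Fin n) (Fin n) ℝ) :
    Set.Nonempty {r : ℝ | ∃ z : EuclideanSpace ℝ (Fin n), ‖z‖ = 1 ∧ r = quadForm A z} := by
  refine ⟨quadForm A (EuclideanSpace.single ⟨0, hn⟩ (1 : ℝ)), ⟨_, ?_, rfl⟩⟩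
  rw [EuclideanSpace.norm_single]; simp

private lemma quadForm_le_lamMax (hn : 0 < n) (A : Matrix (Fin n) (Fin n) ℝ)
    (z : EuclideanSpace ℝ (Fin n)) :
    quadForm A z ≤ ‖z‖ ^ 2 * lamMax A := by
  by_cases hz : z = 0
  · simp [hz, quadForm_zero]
  · have ha : (0 : ℝ) < ‖z‖ := norm_pos_iff.2 hz
    set w : EuclideanSpace ℝ (Fin n) := ‖z‖⁻¹ • z with hw
    have hwn : ‖w‖ = 1 := by
      rw [hw, norm_smul, norm_inv, norm_norm, inv_mul_cancel₀ ha.ne']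
    have hmem : quadForm A w ∈
        {r : ℝ | ∃ z : EuclideanSpace ℝ (Fin n), ‖z‖ = 1 ∧ r = quadForm A z} :=
      ⟨w, hwn, rfl⟩
    have hle : quadForm A w ≤ lamMax A := le_csSup (lamSet_bddAbove A) hmem
    have hzw : z = ‖z‖ • w := by
      rw [hw, smul_smul, mul_inv_cancel₀ ha.ne', one_smul]
    have key : quadForm A z = ‖z‖ ^ 2 * quadForm A w := by
      conv_lhs => rw [hzw, quadForm_smul]
    rw [key]
    nlinarith [sq_nonneg ‖z‖]

private lemma lamMax_sum_le {N : ℕ} (hn : 0 < n) (A : Fin N → Matrix (Fin n) (Fin n) ℝ) :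
    lamMax (∑ k, A k) ≤ ∑ k, lamMax (A k) := by
  refine csSup_le (lamSet_nonempty hn _) ?_
  rintro r ⟨z, hz, rfl⟩
  rw [quadForm_sum]
  exact Finset.sum_le_sum fun k _ =>
    le_csSup (lamSet_bddAbove (A k)) ⟨z, hz, rfl⟩

private lemma hess_sum {N : ℕ} (u : Fin N → EuclideanSpace ℝ (Fin n) → ℝ)
    (hu : ∀ i, ContDiff ℝ 2 (u i)) (x : EuclideanSpace ℝ (Fin n)) :
    hess (fun y => ∑ i, u i y) x = ∑ k, hess (u k) x := by
  have h := iteratedFDeriv_sum (𝕜 := ℝ) (f := u) (u := Finset.univ) (i := 2)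
    (fun j _ => hu j)
  ext i j
  have hfun : (fun y => ∑ i, u i y) = (∑ j ∈ Finset.univ, u j ·) := by
    funext y; simp
  simp only [hess, Matrix.sum_apply, Matrix.of_apply, hfun, h, Finset.sum_apply,
    ContinuousMultilinearMap.sum_apply]

end Stmt8Aux

/-- Theorem 1 (i), superposition of dominative p-superharmonic functions. -/
theorem stmt_8 {n N : ℕ} (hn : 2 ≤ n) (p : ℝ≥0∞) (hp : 2 ≤ p)
    (u : Fin N → EuclideanSpace ℝ (Fin n) → ℝ)
    (hu : ∀ i, ContDiff ℝ 2 (u i))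
    (hD : ∀ i, ∀ x, Dop p (u i) x ≤ 0) :
    ∀ x, DeltaOp p (fun y => ∑ i, u i y) x ≤ 0 := by
  intro x
  have hpos : 0 < n := by omega
  have hH : hess (fun y => ∑ i, u i y) x = ∑ k, hess (u k) x := hess_sum u hu x
  have hT : lapl (fun y => ∑ i, u i y) x = ∑ k, lapl (u k) x := by
    simp only [lapl, hH, Matrix.sum_apply]
    exact Finset.sum_comm
  have hL : lamMax (hess (fun y => ∑ i, u i y) x) ≤ ∑ k, lamMax (hess (u k) x) := by
    rw [hH]; exact lamMax_sum_le hpos _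
  set g := gradient (fun y => ∑ i, u i y) x with hg
  set H := hess (fun y => ∑ i, u i y) x with hHdef
  have hQle : quadForm H g ≤ ‖g‖ ^ 2 * lamMax H := quadForm_le_lamMax hpos H g
  by_cases hptop : p = ⊤
  · -- p = ∞ case
    have hDi : ∀ i, lamMax (hess (u i) x) ≤ 0 := by
      intro i
      have := hD i x
      simpa [Dop, hptop] using this
    have hLsum : (∑ k, lamMax (hess (u k) x)) ≤ 0 :=
      Finset.sum_nonpos fun k _ => hDi k
    have hL0 : lamMax H ≤ 0 := hL.trans hLsum
    simp only [DeltaOp, hptop, if_pos rfl]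
    calc quadForm H g ≤ ‖g‖ ^ 2 * lamMax H := hQle
      _ ≤ 0 := mul_nonpos_of_nonneg_of_nonpos (sq_nonneg _) hL0
  · -- finite p case
    have hc : (2 : ℝ) ≤ p.toReal := by
      have := (ENNReal.toReal_le_toReal (by norm_num) hptop).2 hp
      simpa using this
    set c := p.toReal with hcdef
    have hDi : ∀ i, (c - 2) * lamMax (hess (u i) x) + lapl (u i) x ≤ 0 := by
      intro i
      have := hD i x
      simpa [Dop, hptop] using this
    have hDsum : (c - 2) * lamMax H + lapl (fun y => ∑ i, u i y) x ≤ 0 := by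
      have h1 : (c - 2) * lamMax H ≤ (c - 2) * ∑ k, lamMax (hess (u k) x) :=
        mul_le_mul_of_nonneg_left hL (by linarith)
      have h2 : (∑ k, ((c - 2) * lamMax (hess (u k) x) + lapl (u k) x)) ≤ 0 :=
        Finset.sum_nonpos fun k _ => hDi k
      rw [Finset.sum_add_distrib, ← Finset.mul_sum] at h2
      rw [hT]
      linarith
    simp only [DeltaOp, hptop, if_false, ← hcdef, ← hHdef, ← hg]
    set T := lapl (fun y => ∑ i, u i y) x
    set Q := quadForm H g
    set L := lamMax H
    by_cases hgz : g = 0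
    · have hQ0 : Q = 0 := by
        show quadForm H g = 0
        rw [hgz]; exact quadForm_zero H
      rw [hQ0, mul_zero, add_zero, hgz, norm_zero]
      by_cases hc2 : c = 2
      · rw [hc2, sub_self, Real.rpow_zero, one_mul]
        rw [hc2] at hDsum
        linarith
      · have h0 : (0 : ℝ) ^ (c - 2) = 0 :=
          Real.zero_rpow (fun h => hc2 (by linarith [sub_eq_zero.mp h]))
        rw [h0, zero_mul]
    · have ha : (0 : ℝ) < ‖g‖ := norm_pos_iff.2 hgz
      have hrw : ‖g‖ ^ (c - 4) * ‖g‖ ^ 2 = ‖g‖ ^ (c - 2) := by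
        rw [← Real.rpow_natCast ‖g‖ 2, ← Real.rpow_add ha]
        congr 1
        push_cast
        ring
      have hA : (0 : ℝ) ≤ ‖g‖ ^ (c - 2) := Real.rpow_nonneg ha.le _
      have hB : (0 : ℝ) ≤ (c - 2) * ‖g‖ ^ (c - 4) :=
        mul_nonneg (by linarith) (Real.rpow_nonneg ha.le _)
      have step1 : (c - 2) * ‖g‖ ^ (c - 4) * Q ≤ (c - 2) * ‖g‖ ^ (c - 4) * (‖g‖ ^ 2 * L) :=
        mul_le_mul_of_nonneg_left hQle hB
      have step2 : (c - 2) * ‖g‖ ^ (c - 4) * (‖g‖ ^ 2 * L) = ‖g‖ ^ (c - 2) * ((c - 2) * L) := by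
        rw [← hrw]; ring
      have step3 : ‖g‖ ^ (c - 2) * T + ‖g‖ ^ (c - 2) * ((c - 2) * L) ≤ 0 := by
        rw [← mul_add]
        exact mul_nonpos_of_nonneg_of_nonpos hA (by linarith)
      linarith [step1, step2 ▸ step1]
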